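/- arXiv:2003.06304 — 7 statements merged into one kernel-verified Lean document; each statement's English description precedes it below -/
import Mathlib

section
/- (Lemma 1, MISO case.) Let (A, B, C, D) be a state-space realization with A ∈ ℝ^{n×n}, B ∈ ℝ^{n×m}, C ∈ ℝ^{1×n}, D ∈ ℝ^{1×m} (a multi-input single-output system of order n). Let C₀ ∈ ℝ^{1×n} be any row vector such that the pair (A, C₀) is observable. Then there exist matrices B₀ ∈ ℝ^{n×m} and D₀ ∈ ℝ^{1×m} such that the realization (A, B₀, C₀, D₀) is input-output equivalent to (A, B, C, D); moreover one may take D₀ = D and B₀ = T B where T = Σ_{i=0}^{n−1} tᵢ Aⁱ is chosen so that C₀ T = C. -/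
/-- **Lemma 1, MISO case.** Given a realization `(A, B, C, D)` of a
multi-input single-output system and any row vector `C₀` with `(A, C₀)` observable,
there exist `B₀`, `D₀` making `(A, B₀, C₀, D₀)` input-output equivalent to
`(A, B, C, D)`; moreover one may take `D₀ = D` and `B₀ = T B` where
`T = ∑ tᵢ Aⁱ` satisfies `C₀ T = C`. -/
theorem miso_equivalent_realization {n m : ℕ}
    (A : Matrix (Fin n) (Fin n) ℝ) (B : Matrix (Fin n) (Fin m) ℝ)
    (C : Matrix (Fin 1) (Fin n) ℝ) (D : Matrix (Fin 1) (Fin m) ℝ)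
    (C₀ : Matrix (Fin 1) (Fin n) ℝ)
    (hobs : LinearIndependent ℝ (fun i : Fin n => C₀ * A ^ (i : ℕ))) :
    ∃ (B₀ : Matrix (Fin n) (Fin m) ℝ) (D₀ : Matrix (Fin 1) (Fin m) ℝ) (t : Fin n → ℝ),
      D₀ = D ∧
      B₀ = (∑ i : Fin n, t i • A ^ (i : ℕ)) * B ∧
      C₀ * (∑ i : Fin n, t i • A ^ (i : ℕ)) = C ∧
      ∀ i : ℕ, C * A ^ i * B = C₀ * A ^ i * B₀ := by
  obtain rfl | hn := Nat.eq_zero_or_pos n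
  · refine ⟨(∑ i : Fin 0, (0 : Fin 0 → ℝ) i • A ^ (i : ℕ)) * B, D, 0, rfl, rfl,
      Subsingleton.elim _ _, fun i => ?_⟩
    ext x y
    simp [Matrix.mul_apply]
  have : Nonempty (Fin n) := ⟨⟨0, hn⟩⟩
  have hcard : Fintype.card (Fin n) = Module.finrank ℝ (Matrix (Fin 1) (Fin n) ℝ) := by
    simp [Module.finrank_matrix]
  let b := basisOfLinearIndependentOfCardEqFinrank hobs hcard
  set t : Fin n → ℝ := fun i => b.repr C i with ht
  have hC : ∑ i, t i • (C₀ * A ^ (i : ℕ)) = C := by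
    have h := b.sum_repr C
    simpa [b, ht, coe_basisOfLinearIndependentOfCardEqFinrank] using h
  set T := ∑ i : Fin n, t i • A ^ (i : ℕ) with hT
  have hCT : C₀ * T = C := by
    rw [hT, Matrix.mul_sum]
    simp_rw [Matrix.mul_smul]
    exact hC
  refine ⟨T * B, D, t, rfl, rfl, hCT, ?_⟩
  intro i
  have hcomm : T * A ^ i = A ^ i * T := by
    rw [hT, Finset.sum_mul, Finset.mul_sum]
    refine Finset.sum_congr rfl fun j _ => ?_
    rw [smul_mul_assoc, mul_smul_comm, ← pow_add, ← pow_add, add_comm]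
  calc C * A ^ i * B = C₀ * T * A ^ i * B := by rw [hCT]
    _ = C₀ * (T * A ^ i) * B := by rw [Matrix.mul_assoc C₀]
    _ = C₀ * (A ^ i * T) * B := by rw [hcomm]
    _ = C₀ * A ^ i * (T * B) := by
        rw [← Matrix.mul_assoc C₀, Matrix.mul_assoc]
end

section
/- (SIMO analogue of Lemma 1.) Let (A, B, C, D) be a state-space realization with A ∈ ℝ^{n×n}, B ∈ ℝ^{n×1}, C ∈ ℝ^{p×n}, D ∈ ℝ^{p×1} (a single-input multi-output system of order n). Let B₀ ∈ ℝ^{n×1} be any column vector such that the vectors B₀, A B₀, …, A^{n−1} B₀ are linearly independent (i.e., the pair (A, B₀) is controllable). Then there exist matrices C₀ ∈ ℝ^{p×n} and D₀ ∈ ℝ^{p×1} such that the realization (A, B₀, C₀, D₀) is input-output equivalent to (A, B, C, D). -/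
/-- **SIMO analogue of Lemma 1.** Given a realization `(A, B, C, D)` of
a single-input multi-output system and any column vector `B₀` with `(A, B₀)`
controllable (the columns `B₀, AB₀, …, A^{n-1}B₀` are linearly independent), there
exist `C₀`, `D₀` making `(A, B₀, C₀, D₀)` input-output equivalent to `(A, B, C, D)`. -/
theorem simo_equivalent_realization {n p : ℕ}
    (A : Matrix (Fin n) (Fin n) ℝ) (B : Matrix (Fin n) (Fin 1) ℝ)
    (C : Matrix (Fin p) (Fin n) ℝ) (D : Matrix (Fin p) (Fin 1) ℝ)
    (B₀ : Matrix (Fin n) (Fin 1) ℝ)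
    (hctrb : LinearIndependent ℝ (fun i : Fin n => A ^ (i : ℕ) * B₀)) :
    ∃ (C₀ : Matrix (Fin p) (Fin n) ℝ) (D₀ : Matrix (Fin p) (Fin 1) ℝ),
      D₀ = D ∧ ∀ i : ℕ, C * A ^ i * B = C₀ * A ^ i * B₀ := by
  rcases Nat.eq_zero_or_pos n with hn | hn
  · subst hn
    refine ⟨0, D, rfl, fun i => ?_⟩
    ext a b
    simp [Matrix.mul_apply]
  have : NeZero n := ⟨hn.ne'⟩
  -- cardinality
  have hcard : Fintype.card (Fin n) = Module.finrank ℝ (Matrix (Fin n) (Fin 1) ℝ) := by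
    rw [Module.finrank_matrix]
    simp
  let b : Module.Basis (Fin n) ℝ (Matrix (Fin n) (Fin 1) ℝ) :=
    basisOfLinearIndependentOfCardEqFinrank hctrb hcard
  let g : Matrix (Fin n) (Fin 1) ℝ →ₗ[ℝ] Matrix (Fin p) (Fin 1) ℝ :=
    b.constr ℝ (fun j : Fin n => C * A ^ (j : ℕ) * B)
  have hgb : ∀ j : Fin n, g (A ^ (j : ℕ) * B₀) = C * A ^ (j : ℕ) * B := by
    intro j
    have hb : b j = A ^ (j : ℕ) * B₀ := by
      simp [b, coe_basisOfLinearIndependentOfCardEqFinrank]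
    rw [← hb]
    exact b.constr_basis ℝ _ j
  -- C₀ as a matrix
  let C₀ : Matrix (Fin p) (Fin n) ℝ := fun i k => g (Matrix.single k 0 1) i 0
  have hC₀ : ∀ v : Matrix (Fin n) (Fin 1) ℝ, C₀ * v = g v := by
    intro v
    have hv : v = ∑ k : Fin n, v k 0 • Matrix.single k 0 1 := by
      ext a c
      fin_cases c
      simp [Matrix.single, Matrix.sum_apply]
    conv_rhs => rw [hv]
    rw [map_sum]
    ext i c
    fin_cases c
    simp only [Matrix.mul_apply, Matrix.sum_apply, map_smul, Matrix.smul_apply, smul_eq_mul]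
    refine Finset.sum_congr rfl fun k _ => ?_
    simp [C₀, mul_comm]
  -- Cayley-Hamilton
  have hmonic := Matrix.charpoly_monic A
  have hdeg : A.charpoly.natDegree = n := by
    rw [Matrix.charpoly_natDegree_eq_dim]
    simp
  have hCH : A ^ n = -∑ j ∈ Finset.range n, A.charpoly.coeff j • A ^ j := by
    have h0 := Matrix.aeval_self_charpoly A
    rw [Polynomial.aeval_eq_sum_range, hdeg, Finset.sum_range_succ] at h0
    have hc : A.charpoly.coeff n = 1 := by
      have := hmonic.leadingCoeff
      rwa [Polynomial.leadingCoeff, hdeg] at this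
    rw [hc, one_smul] at h0
    linear_combination (norm := module) h0
  -- main claim by strong induction
  have key : ∀ i : ℕ, g (A ^ i * B₀) = C * A ^ i * B := by
    intro i
    induction i using Nat.strong_induction_on with
    | _ i ih =>
      rcases lt_or_ge i n with hi | hi
      · exact hgb ⟨i, hi⟩
      · have hpow : A ^ i = A ^ (i - n) * A ^ n := by
          rw [← pow_add, Nat.sub_add_cancel hi]
        have hexp : A ^ i * B₀ =
            -∑ j ∈ Finset.range n, A.charpoly.coeff j • (A ^ (i - n + j) * B₀) := by
          rw [hpow, hCH]
          simp only [Matrix.mul_neg, Matrix.neg_mul, Matrix.mul_sum, Matrix.sum_mul,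
            Matrix.mul_smul, Matrix.smul_mul, Matrix.mul_assoc, pow_add]
        have hlt : ∀ j ∈ Finset.range n, i - n + j < i := by
          intro j hj
          have := Finset.mem_range.mp hj
          omega
        rw [hexp, map_neg, map_sum]
        have hexpC : C * A ^ i * B =
            -∑ j ∈ Finset.range n, A.charpoly.coeff j • (C * A ^ (i - n + j) * B) := by
          rw [Matrix.mul_assoc, hpow, hCH]
          simp only [Matrix.mul_neg, Matrix.neg_mul, Matrix.mul_sum, Matrix.sum_mul,
            Matrix.mul_smul, Matrix.smul_mul, Matrix.mul_assoc, pow_add]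
        rw [hexpC]
        congr 1
        refine Finset.sum_congr rfl fun j hj => ?_
        rw [map_smul, ih _ (hlt j hj)]
  refine ⟨C₀, D, rfl, fun i => ?_⟩
  rw [Matrix.mul_assoc C₀, hC₀, key]
end

section
/- (Theorem on optimality of fixed C, MISO case.) Fix A ∈ ℝ^{n×n} and data u : {1, …, N} → ℝ^m, y : {1, …, N} → ℝ. Suppose (B*, C*, D*) with B* ∈ ℝ^{n×m}, C* ∈ ℝ^{1×n}, D* ∈ ℝ^{1×m} minimizes the output-error cost V(y, u, A, B, C, D) over all (B, C, D). Let C₀ ∈ ℝ^{1×n} be any row vector such that (A, C₀) is observable, and suppose (B₀, D₀) minimizes V(y, u, A, B, C₀, D) over all (B, D). Then V(y, u, A, B*, C*, D*) = V(y, u, A, B₀, C₀, D₀). -/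
open Matrix

/-- The output-error cost
`V(y, u, A, B, C, D) = ∑_{t=1}^N ‖y(t) − D u(t) − C ∑_{k=1}^t A^{t−k} B u(k)‖²`,
where `‖·‖` is the Euclidean norm on `ℝ^p` (realized via `EuclideanSpace`). -/
noncomputable def outputErrorCost {N n m p : ℕ}
    (y : Fin N → Fin p → ℝ) (u : Fin N → Fin m → ℝ)
    (A : Matrix (Fin n) (Fin n) ℝ) (B : Matrix (Fin n) (Fin m) ℝ)
    (C : Matrix (Fin p) (Fin n) ℝ) (D : Matrix (Fin p) (Fin m) ℝ) : ℝ :=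
  ∑ t : Fin N,
    ‖(WithLp.equiv 2 (Fin p → ℝ)).symm
        (y t - D *ᵥ u t - C *ᵥ ∑ k ∈ Finset.Iic t, A ^ ((t : ℕ) - (k : ℕ)) *ᵥ (B *ᵥ u k))‖ ^ 2

/-- **optimality of fixed `C`, MISO case.** If `(B*, C*, D*)` minimizes
the output-error cost over all `(B, C, D)` for fixed `A`, `C₀` is any row vector with
`(A, C₀)` observable, and `(B₀, D₀)` minimizes the cost over all `(B, D)` with `C₀`
fixed, then the two optimal cost values agree. -/
theorem fixed_C_optimality_miso {N n m : ℕ}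
    (y : Fin N → Fin 1 → ℝ) (u : Fin N → Fin m → ℝ)
    (A : Matrix (Fin n) (Fin n) ℝ)
    (Bstar : Matrix (Fin n) (Fin m) ℝ) (Cstar : Matrix (Fin 1) (Fin n) ℝ)
    (Dstar : Matrix (Fin 1) (Fin m) ℝ)
    (hmin : ∀ (B : Matrix (Fin n) (Fin m) ℝ) (C : Matrix (Fin 1) (Fin n) ℝ)
      (D : Matrix (Fin 1) (Fin m) ℝ),
      outputErrorCost y u A Bstar Cstar Dstar ≤ outputErrorCost y u A B C D)
    (C₀ : Matrix (Fin 1) (Fin n) ℝ)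
    (hobs : LinearIndependent ℝ (fun i : Fin n => C₀ * A ^ (i : ℕ)))
    (B₀ : Matrix (Fin n) (Fin m) ℝ) (D₀ : Matrix (Fin 1) (Fin m) ℝ)
    (hmin₀ : ∀ (B : Matrix (Fin n) (Fin m) ℝ) (D : Matrix (Fin 1) (Fin m) ℝ),
      outputErrorCost y u A B₀ C₀ D₀ ≤ outputErrorCost y u A B C₀ D) :
    outputErrorCost y u A Bstar Cstar Dstar = outputErrorCost y u A B₀ C₀ D₀ := by
  -- Build the basis of row vectors C₀ A^i
  have hcard : Fintype.card (Fin n) = Module.finrank ℝ (Matrix (Fin 1) (Fin n) ℝ) := by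
    simp [Module.finrank_matrix]
  have hspan := hobs.span_eq_top_of_card_eq_finrank' hcard
  have hmem : Cstar ∈ Submodule.span ℝ (Set.range fun i : Fin n => C₀ * A ^ (i : ℕ)) := by
    rw [hspan]; trivial
  obtain ⟨α, hC'⟩ := (Submodule.mem_span_range_iff_exists_fun ℝ).mp hmem
  have hC : Cstar = ∑ i : Fin n, α i • (C₀ * A ^ (i : ℕ)) := hC'.symm
  set B : Matrix (Fin n) (Fin m) ℝ := ∑ i : Fin n, α i • (A ^ (i : ℕ) * Bstar) with hB
  have key : ∀ t : ℕ, C₀ * (A ^ t * B) = Cstar * (A ^ t * Bstar) := by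
    intro t
    rw [hB, hC]
    rw [Matrix.mul_sum, Matrix.mul_sum, Matrix.sum_mul]
    refine Finset.sum_congr rfl fun i _ => ?_
    rw [Matrix.mul_smul, Matrix.mul_smul, Matrix.smul_mul]
    congr 1
    calc C₀ * (A ^ t * (A ^ (i : ℕ) * Bstar)) = C₀ * (A ^ (i : ℕ) * (A ^ t * Bstar)) := by
          rw [← Matrix.mul_assoc (A ^ t), ← Matrix.mul_assoc (A ^ (i : ℕ)),
            ← pow_add, ← pow_add, Nat.add_comm]
      _ = C₀ * A ^ (i : ℕ) * (A ^ t * Bstar) := by rw [Matrix.mul_assoc]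
  have hcost : outputErrorCost y u A B C₀ Dstar = outputErrorCost y u A Bstar Cstar Dstar := by
    unfold outputErrorCost
    refine Finset.sum_congr rfl fun t _ => ?_
    have : ∀ (C' : Matrix (Fin 1) (Fin n) ℝ) (B' : Matrix (Fin n) (Fin m) ℝ),
        C' *ᵥ ∑ k ∈ Finset.Iic t, A ^ ((t : ℕ) - (k : ℕ)) *ᵥ (B' *ᵥ u k)
          = ∑ k ∈ Finset.Iic t, (C' * (A ^ ((t : ℕ) - (k : ℕ)) * B')) *ᵥ u k := by
      intro C' B'
      rw [← Matrix.mulVecLin_apply, map_sum]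
      refine Finset.sum_congr rfl fun k _ => ?_
      rw [Matrix.mulVecLin_apply, Matrix.mulVec_mulVec, Matrix.mulVec_mulVec, Matrix.mul_assoc]
    have h1 : C₀ *ᵥ ∑ k ∈ Finset.Iic t, A ^ ((t : ℕ) - (k : ℕ)) *ᵥ (B *ᵥ u k)
        = Cstar *ᵥ ∑ k ∈ Finset.Iic t, A ^ ((t : ℕ) - (k : ℕ)) *ᵥ (Bstar *ᵥ u k) := by
      rw [this C₀ B, this Cstar Bstar]
      exact Finset.sum_congr rfl fun k _ => by rw [key]
    rw [h1]
  exact le_antisymm (le_trans (hmin B₀ C₀ D₀) le_rfl)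
    (le_trans (hmin₀ B Dstar) (le_of_eq hcost))
end

section
/- (Infimum form of the fixed-C optimality theorem, MISO case.) Fix A ∈ ℝ^{n×n} and data u : {1, …, N} → ℝ^m, y : {1, …, N} → ℝ. Let C₀ ∈ ℝ^{1×n} be any row vector such that (A, C₀) is observable. Then the infimum of V(y, u, A, B, C₀, D) over all B ∈ ℝ^{n×m} and D ∈ ℝ^{1×m} equals the infimum of V(y, u, A, B, C, D) over all B ∈ ℝ^{n×m}, C ∈ ℝ^{1×n}, and D ∈ ℝ^{1×m}. -/
open Matrix

lemma mulVec_sum' {α : Type*} {p n : ℕ} (M : Matrix (Fin p) (Fin n) ℝ)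
    (s : Finset α) (f : α → (Fin n → ℝ)) :
    M *ᵥ (∑ k ∈ s, f k) = ∑ k ∈ s, M *ᵥ f k := by
  ext j
  simp only [Matrix.mulVec, dotProduct, Finset.sum_apply, Finset.mul_sum]
  exact Finset.sum_comm

/-- **infimum form of the fixed-`C` optimality theorem, MISO case.**
For any row vector `C₀` with `(A, C₀)` observable, the infimum of the output-error
cost over `(B, D)` with `C₀` fixed equals the infimum over all `(B, C, D)`. -/
theorem fixed_C_optimality_miso_inf {N n m : ℕ}
    (y : Fin N → Fin 1 → ℝ) (u : Fin N → Fin m → ℝ)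
    (A : Matrix (Fin n) (Fin n) ℝ)
    (C₀ : Matrix (Fin 1) (Fin n) ℝ)
    (hobs : LinearIndependent ℝ (fun i : Fin n => C₀ * A ^ (i : ℕ))) :
    sInf {v : ℝ | ∃ (B : Matrix (Fin n) (Fin m) ℝ) (D : Matrix (Fin 1) (Fin m) ℝ),
        v = outputErrorCost y u A B C₀ D} =
      sInf {v : ℝ | ∃ (B : Matrix (Fin n) (Fin m) ℝ) (C : Matrix (Fin 1) (Fin n) ℝ)
        (D : Matrix (Fin 1) (Fin m) ℝ), v = outputErrorCost y u A B C D} := by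
  have hcard : Fintype.card (Fin n) = Module.finrank ℝ (Matrix (Fin 1) (Fin n) ℝ) := by
    simp [Module.finrank_matrix]
  congr 1
  ext v
  simp only [Set.mem_setOf_eq]
  constructor
  · rintro ⟨B, D, rfl⟩
    exact ⟨B, C₀, D, rfl⟩
  · rintro ⟨B, C, D, rfl⟩
    rcases Nat.eq_zero_or_pos n with hn | hn
    · subst hn
      exact ⟨B, D, by rw [Subsingleton.elim C₀ C]⟩
    haveI : NeZero n := ⟨hn.ne'⟩
    set b := basisOfLinearIndependentOfCardEqFinrank hobs hcard with hb
    set c : Fin n → ℝ := fun i => b.repr C i with hc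
    have hC : C = ∑ i, c i • (C₀ * A ^ (i : ℕ)) := by
      conv_lhs => rw [← b.sum_repr C]
      refine Finset.sum_congr rfl fun i _ => ?_
      rw [hb, coe_basisOfLinearIndependentOfCardEqFinrank]
    refine ⟨∑ i, c i • (A ^ (i : ℕ) * B), D, ?_⟩
    have key : ∀ e : ℕ,
        C₀ * A ^ e * (∑ i, c i • (A ^ (i : ℕ) * B)) = C * A ^ e * B := by
      intro e
      conv_rhs => rw [hC]
      simp only [Matrix.mul_sum, Matrix.sum_mul, Matrix.mul_smul, Matrix.smul_mul,
        Matrix.mul_assoc]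
      refine Finset.sum_congr rfl fun i _ => ?_
      congr 1
      rw [← Matrix.mul_assoc, ← Matrix.mul_assoc, Matrix.mul_assoc C₀ (A ^ e),
        ← pow_add, Nat.add_comm, pow_add, Matrix.mul_assoc C₀, Matrix.mul_assoc]
    unfold outputErrorCost
    refine Finset.sum_congr rfl fun t _ => ?_
    have hv : C₀ *ᵥ ∑ k ∈ Finset.Iic t,
          A ^ ((t : ℕ) - (k : ℕ)) *ᵥ ((∑ i, c i • (A ^ (i : ℕ) * B)) *ᵥ u k)
        = C *ᵥ ∑ k ∈ Finset.Iic t, A ^ ((t : ℕ) - (k : ℕ)) *ᵥ (B *ᵥ u k) := by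
      rw [mulVec_sum', mulVec_sum']
      refine Finset.sum_congr rfl fun k _ => ?_
      simp only [Matrix.mulVec_mulVec]
      rw [← Matrix.mul_assoc, ← Matrix.mul_assoc, key]
    rw [hv]
end

section
/- (Infimum form of the fixed-B optimality theorem, SIMO case.) Fix A ∈ ℝ^{n×n} and data u : {1, …, N} → ℝ, y : {1, …, N} → ℝ^p. Let B₀ ∈ ℝ^{n×1} be any column vector such that the pair (A, B₀) is controllable. Then the infimum of V(y, u, A, B₀, C, D) over all C ∈ ℝ^{p×n} and D ∈ ℝ^{p×1} equals the infimum of V(y, u, A, B, C, D) over all B ∈ ℝ^{n×1}, C ∈ ℝ^{p×n}, and D ∈ ℝ^{p×1}. -/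
open Matrix

lemma exists_T {n : ℕ} (A : Matrix (Fin n) (Fin n) ℝ) (B₀ B : Matrix (Fin n) (Fin 1) ℝ)
    (hctrb : LinearIndependent ℝ (fun i : Fin n => A ^ (i : ℕ) * B₀)) :
    ∃ T : Matrix (Fin n) (Fin n) ℝ, T * B₀ = B ∧ A * T = T * A := by
  rcases Nat.eq_zero_or_pos n with hn | hn
  · subst hn
    exact ⟨1, Subsingleton.elim _ _, Subsingleton.elim _ _⟩
  haveI : Nonempty (Fin n) := ⟨⟨0, hn⟩⟩
  have hcard : Fintype.card (Fin n) = Module.finrank ℝ (Matrix (Fin n) (Fin 1) ℝ) := by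
    simp [Module.finrank_matrix]
  let b := basisOfLinearIndependentOfCardEqFinrank hctrb hcard
  set c : Fin n → ℝ := fun i => b.repr B i with hc
  refine ⟨∑ i : Fin n, c i • A ^ (i : ℕ), ?_, ?_⟩
  · rw [Matrix.sum_mul]
    simp only [Matrix.smul_mul]
    have := b.sum_repr B
    simpa [b, coe_basisOfLinearIndependentOfCardEqFinrank, hc] using this
  · rw [Finset.mul_sum, Finset.sum_mul]
    refine Finset.sum_congr rfl fun i _ => ?_
    rw [mul_smul_comm, smul_mul_assoc, ← pow_succ', pow_succ]

/-- **infimum form of the fixed-`B` optimality theorem, SIMO case.**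
For any column vector `B₀` with `(A, B₀)` controllable (the columns
`B₀, AB₀, …, A^{n-1}B₀` are linearly independent), the infimum of the output-error
cost over `(C, D)` with `B₀` fixed equals the infimum over all `(B, C, D)`. -/
theorem fixed_B_optimality_simo_inf {N n p : ℕ}
    (y : Fin N → Fin p → ℝ) (u : Fin N → Fin 1 → ℝ)
    (A : Matrix (Fin n) (Fin n) ℝ)
    (B₀ : Matrix (Fin n) (Fin 1) ℝ)
    (hctrb : LinearIndependent ℝ (fun i : Fin n => A ^ (i : ℕ) * B₀)) :
    sInf {v : ℝ | ∃ (C : Matrix (Fin p) (Fin n) ℝ) (D : Matrix (Fin p) (Fin 1) ℝ),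
        v = outputErrorCost y u A B₀ C D} =
      sInf {v : ℝ | ∃ (B : Matrix (Fin n) (Fin 1) ℝ) (C : Matrix (Fin p) (Fin n) ℝ)
        (D : Matrix (Fin p) (Fin 1) ℝ), v = outputErrorCost y u A B C D} := by
  congr 1
  ext v
  simp only [Set.mem_setOf_eq]
  constructor
  · rintro ⟨C, D, rfl⟩
    exact ⟨B₀, C, D, rfl⟩
  · rintro ⟨B, C, D, rfl⟩
    obtain ⟨T, hTB, hAT⟩ := exists_T A B₀ B hctrb
    refine ⟨C * T, D, ?_⟩
    unfold outputErrorCost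
    refine Finset.sum_congr rfl fun t _ => ?_
    have hsum : (C * T) *ᵥ (∑ k ∈ Finset.Iic t, A ^ ((t:ℕ) - (k:ℕ)) *ᵥ (B₀ *ᵥ u k))
        = C *ᵥ (∑ k ∈ Finset.Iic t, A ^ ((t:ℕ) - (k:ℕ)) *ᵥ (B *ᵥ u k)) := by
      simp only [← Matrix.mulVecLin_apply, map_sum]
      refine Finset.sum_congr rfl fun k _ => ?_
      simp only [Matrix.mulVecLin_apply, Matrix.mulVec_mulVec]
      have hcomm : Commute A T := hAT
      have hpow : A ^ ((t:ℕ) - (k:ℕ)) * T = T * A ^ ((t:ℕ) - (k:ℕ)) :=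
        (hcomm.pow_left _).eq
      have h1 : T * (A ^ ((t:ℕ) - (k:ℕ)) * B₀) = A ^ ((t:ℕ) - (k:ℕ)) * B := by
        rw [← Matrix.mul_assoc, ← hpow, Matrix.mul_assoc, hTB]
      rw [Matrix.mul_assoc C T, h1]
    rw [hsum]
end

section
/- (Transfer-function form of Lemma 1, MISO case.) Let A ∈ ℝ^{n×n}, B ∈ ℝ^{n×m}, C ∈ ℝ^{1×n}, and let C₀ ∈ ℝ^{1×n} be such that the pair (A, C₀) is observable. Then there exists B₀ ∈ ℝ^{n×m} such that for every z ∈ ℂ that is not an eigenvalue of A, C (zI − A)^{−1} B = C₀ (zI − A)^{−1} B₀. -/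
open Matrix

/-- **transfer-function form of Lemma 1, MISO case.** If `(A, C₀)` is
observable, then there exists `B₀` such that for every `z ∈ ℂ` which is not an
eigenvalue of `A` (i.e. `det (zI − A) ≠ 0` over `ℂ`),
`C (zI − A)⁻¹ B = C₀ (zI − A)⁻¹ B₀`. -/
theorem miso_transfer_function_form {n m : ℕ}
    (A : Matrix (Fin n) (Fin n) ℝ) (B : Matrix (Fin n) (Fin m) ℝ)
    (C C₀ : Matrix (Fin 1) (Fin n) ℝ)
    (hobs : LinearIndependent ℝ (fun i : Fin n => C₀ * A ^ (i : ℕ))) :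
    ∃ B₀ : Matrix (Fin n) (Fin m) ℝ,
      ∀ z : ℂ, (z • (1 : Matrix (Fin n) (Fin n) ℂ) - A.map Complex.ofReal).det ≠ 0 →
        C.map (Complex.ofReal) *
            (z • (1 : Matrix (Fin n) (Fin n) ℂ) - A.map Complex.ofReal)⁻¹ *
            B.map (Complex.ofReal) =
          C₀.map (Complex.ofReal) *
            (z • (1 : Matrix (Fin n) (Fin n) ℂ) - A.map Complex.ofReal)⁻¹ *
            B₀.map (Complex.ofReal) := by
  classical
  rcases Nat.eq_zero_or_pos n with hn | hn
  · subst hn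
    refine ⟨B, fun z hz => ?_⟩
    ext i j
    simp [Matrix.mul_apply]
  have : Nonempty (Fin n) := ⟨⟨0, hn⟩⟩
  have hcard : Fintype.card (Fin n) = Module.finrank ℝ (Matrix (Fin 1) (Fin n) ℝ) := by
    simp [Module.finrank_matrix]
  let b : Module.Basis (Fin n) ℝ (Matrix (Fin 1) (Fin n) ℝ) :=
    basisOfLinearIndependentOfCardEqFinrank hobs hcard
  set c : Fin n → ℝ := fun i => b.repr C i with hc
  have hC : C = ∑ i : Fin n, c i • (C₀ * A ^ (i : ℕ)) := by
    have h1 := b.sum_repr C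
    have h2 : ∀ i, b i = C₀ * A ^ (i : ℕ) := fun i => by
      rw [show b = basisOfLinearIndependentOfCardEqFinrank hobs hcard from rfl,
        coe_basisOfLinearIndependentOfCardEqFinrank]
    rw [← h1]
    exact Finset.sum_congr rfl fun i _ => by rw [h2]
  set p : Matrix (Fin n) (Fin n) ℝ := ∑ i : Fin n, c i • A ^ (i : ℕ) with hp
  have hCp : C = C₀ * p := by
    rw [hC, hp, Matrix.mul_sum]
    exact Finset.sum_congr rfl fun i _ => by rw [Matrix.mul_smul]
  refine ⟨p * B, fun z hz => ?_⟩
  set A' := A.map (Complex.ofReal : ℝ → ℂ) with hA'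
  set M := z • (1 : Matrix (Fin n) (Fin n) ℂ) - A' with hM
  have hdet : IsUnit M.det := isUnit_iff_ne_zero.mpr hz
  have hmapmul : ∀ {k l : ℕ} (X : Matrix (Fin k) (Fin n) ℝ) (Y : Matrix (Fin n) (Fin l) ℝ),
      (X * Y).map (Complex.ofReal : ℝ → ℂ) =
        X.map Complex.ofReal * Y.map Complex.ofReal := by
    intro k l X Y
    exact Matrix.map_mul (f := Complex.ofRealHom)
  -- p' commutes with A'
  have hpA : p.map (Complex.ofReal : ℝ → ℂ) * A' = A' * p.map Complex.ofReal := by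
    have : p * A = A * p := by
      rw [hp, Finset.sum_mul, Finset.mul_sum]
      refine Finset.sum_congr rfl fun i _ => ?_
      rw [Matrix.smul_mul, Matrix.mul_smul, ← pow_succ, ← pow_succ']
    calc p.map (Complex.ofReal : ℝ → ℂ) * A' = (p * A).map Complex.ofReal :=
          (hmapmul p A).symm
      _ = (A * p).map Complex.ofReal := by rw [this]
      _ = A' * p.map Complex.ofReal := hmapmul A p
  -- p' commutes with M
  have hpM : p.map (Complex.ofReal : ℝ → ℂ) * M = M * p.map Complex.ofReal := by
    rw [hM, Matrix.mul_sub, Matrix.sub_mul, hpA, Matrix.mul_smul, Matrix.smul_mul,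
      Matrix.mul_one, Matrix.one_mul]
  -- hence p' commutes with M⁻¹
  have hpMinv : p.map (Complex.ofReal : ℝ → ℂ) * M⁻¹ = M⁻¹ * p.map Complex.ofReal := by
    have h1 : M⁻¹ * (p.map (Complex.ofReal : ℝ → ℂ) * M) * M⁻¹ =
        M⁻¹ * (M * p.map Complex.ofReal) * M⁻¹ := by rw [hpM]
    rw [← Matrix.mul_assoc M⁻¹ (p.map Complex.ofReal) M,
      Matrix.mul_nonsing_inv_cancel_right _ _ hdet,
      Matrix.nonsing_inv_mul_cancel_left _ _ hdet] at h1
    exact h1.symm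
  -- conclude
  have hCmap : C.map (Complex.ofReal : ℝ → ℂ) =
      C₀.map Complex.ofReal * p.map Complex.ofReal := by
    rw [hCp]; exact hmapmul C₀ p
  rw [hCmap, hmapmul p B]
  rw [Matrix.mul_assoc (C₀.map Complex.ofReal), hpMinv]
  rw [Matrix.mul_assoc, Matrix.mul_assoc, Matrix.mul_assoc]
end

section
/- (Frequency-domain fixed-C optimality, MISO case, infimum form.) Fix A ∈ ℝ^{n×n}, complex frequency points z₁, …, z_K ∈ ℂ none of which is an eigenvalue of A, and frequency response data G₁, …, G_K ∈ ℂ^{1×m}. Define the frequency-domain cost V(A, B, C, D) = Σ_{k=1}^{K} ‖C (z_k I − A)^{−1} B + D − G_k‖_F², where ‖·‖_F is the Frobenius norm. Let C₀ ∈ ℝ^{1×n} be any row vector such that (A, C₀) is observable. Then the infimum of V(A, B, C₀, D) over all B ∈ ℝ^{n×m} and D ∈ ℝ^{1×m} equals the infimum of V(A, B, C, D) over all B ∈ ℝ^{n×m}, C ∈ ℝ^{1×n}, and D ∈ ℝ^{1×m}. -/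
open Matrix

/-- The squared Frobenius norm `‖M‖_F²` of a complex matrix. -/
noncomputable def frobeniusNormSq {p m : ℕ} (M : Matrix (Fin p) (Fin m) ℂ) : ℝ :=
  ∑ i : Fin p, ∑ j : Fin m, ‖M i j‖ ^ 2

/-- The frequency-domain cost
`V(A, B, C, D) = ∑_{k=1}^K ‖C (z_k I − A)⁻¹ B + D − G_k‖_F²`
for frequency points `z` and frequency response data `G`, with the real matrices
`A, B, C, D` viewed as complex matrices. -/
noncomputable def freqDomainCost {K n m : ℕ} (z : Fin K → ℂ) (G : Fin K → Matrix (Fin 1) (Fin m) ℂ)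
    (A : Matrix (Fin n) (Fin n) ℝ) (B : Matrix (Fin n) (Fin m) ℝ)
    (C : Matrix (Fin 1) (Fin n) ℝ) (D : Matrix (Fin 1) (Fin m) ℝ) : ℝ :=
  ∑ k : Fin K,
    frobeniusNormSq
      (C.map (Complex.ofReal) *
          (z k • (1 : Matrix (Fin n) (Fin n) ℂ) - A.map Complex.ofReal)⁻¹ *
          B.map (Complex.ofReal) +
        D.map (Complex.ofReal) - G k)

/-- Key step: for any `(B, C)` there is `B'` with the same transfer function
contribution when the output matrix is replaced by `C₀`. -/
theorem freq_key {K n m : ℕ}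
    (A : Matrix (Fin n) (Fin n) ℝ)
    (z : Fin K → ℂ)
    (hz : ∀ k : Fin K, (z k • (1 : Matrix (Fin n) (Fin n) ℂ) - A.map Complex.ofReal).det ≠ 0)
    (G : Fin K → Matrix (Fin 1) (Fin m) ℂ)
    (C₀ : Matrix (Fin 1) (Fin n) ℝ)
    (hobs : LinearIndependent ℝ (fun i : Fin n => C₀ * A ^ (i : ℕ)))
    (B : Matrix (Fin n) (Fin m) ℝ) (C : Matrix (Fin 1) (Fin n) ℝ)
    (D : Matrix (Fin 1) (Fin m) ℝ) :
    ∃ B' : Matrix (Fin n) (Fin m) ℝ,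
      freqDomainCost z G A B C D = freqDomainCost z G A B' C₀ D := by
  rcases Nat.eq_zero_or_pos n with hn | hn
  · subst hn
    exact ⟨B, by have : C = C₀ := Subsingleton.elim _ _; rw [this]⟩
  -- `Fin n` is nonempty
  haveI : Nonempty (Fin n) := ⟨⟨0, hn⟩⟩
  have hcard : Fintype.card (Fin n) =
      Module.finrank ℝ (Matrix (Fin 1) (Fin n) ℝ) := by
    simp [Module.finrank_matrix]
  let b := basisOfLinearIndependentOfCardEqFinrank hobs hcard
  have hb : ∀ i, b i = C₀ * A ^ (i : ℕ) := fun i => by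
    simp [b, coe_basisOfLinearIndependentOfCardEqFinrank]
  set α : Fin n → ℝ := fun i => b.repr C i with hα
  have hC : C = ∑ i : Fin n, α i • (C₀ * A ^ (i : ℕ)) := by
    conv_lhs => rw [← b.sum_repr C]
    exact Finset.sum_congr rfl fun i _ => by rw [hb]
  refine ⟨(∑ i : Fin n, α i • A ^ (i : ℕ)) * B, ?_⟩
  unfold freqDomainCost
  refine Finset.sum_congr rfl fun k _ => ?_
  congr 1
  congr 1
  congr 1
  -- the core matrix identity
  set Am : Matrix (Fin n) (Fin n) ℂ := A.map Complex.ofReal with hAm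
  set M : Matrix (Fin n) (Fin n) ℂ := z k • 1 - Am with hM
  have hMdet : IsUnit M.det := isUnit_iff_ne_zero.mpr (hz k)
  have hMi : M⁻¹ * M = 1 := nonsing_inv_mul M hMdet
  have hiM : M * M⁻¹ = 1 := mul_nonsing_inv M hMdet
  have hcommA : Am * M = M * Am := by
    simp only [hM, mul_sub, sub_mul, Matrix.mul_smul, Matrix.smul_mul, Matrix.mul_one,
      Matrix.one_mul]
  have hcomm : ∀ i : ℕ, Am ^ i * M⁻¹ = M⁻¹ * Am ^ i := by
    intro i
    have h : Commute (Am ^ i) M := Commute.pow_left hcommA i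
    obtain ⟨u, hu⟩ := (Matrix.isUnit_iff_isUnit_det M).mpr hMdet
    rw [← hu] at h ⊢
    rw [← Matrix.coe_units_inv]
    exact h.units_inv_right
  -- mapped versions
  have hmapsmul : ∀ (r : ℝ) (X : Matrix (Fin 1) (Fin n) ℝ),
      (r • X).map Complex.ofReal = (r : ℂ) • X.map Complex.ofReal := by
    intro r X; ext i j; simp [Matrix.map_apply]
  have hmapsmul' : ∀ (r : ℝ) (X : Matrix (Fin n) (Fin n) ℝ),
      (r • X).map Complex.ofReal = (r : ℂ) • X.map Complex.ofReal := by
    intro r X; ext i j; simp [Matrix.map_apply]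
  have hmapsum : ∀ {p q : ℕ} (f : Fin n → Matrix (Fin p) (Fin q) ℝ),
      (∑ i : Fin n, f i).map Complex.ofReal
        = ∑ i : Fin n, (f i).map Complex.ofReal := by
    intro p q f; ext i j; simp [Matrix.map_apply, Matrix.sum_apply]
  have hmapmul : ∀ {p q r : ℕ} (X : Matrix (Fin p) (Fin q) ℝ)
      (Y : Matrix (Fin q) (Fin r) ℝ),
      (X * Y).map Complex.ofReal = X.map Complex.ofReal * Y.map Complex.ofReal := by
    intro p q r X Y
    exact Matrix.map_mul (f := Complex.ofRealHom)
  have hpow : ∀ i : ℕ, (A ^ i).map Complex.ofReal = Am ^ i := by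
    intro i
    induction i with
    | zero =>
      ext i j
      simp [Matrix.map_apply, Matrix.one_apply, apply_ite Complex.ofReal]
    | succ i ih => rw [pow_succ, hmapmul, ih, pow_succ]
  have hCc : C.map Complex.ofReal
      = ∑ i : Fin n, (α i : ℂ) • (C₀.map Complex.ofReal * Am ^ (i : ℕ)) := by
    rw [hC, hmapsum]
    refine Finset.sum_congr rfl fun i _ => ?_
    rw [hmapsmul, hmapmul, hpow]
  have hBc : ((∑ i : Fin n, α i • A ^ (i : ℕ)) * B).map Complex.ofReal
      = (∑ i : Fin n, (α i : ℂ) • Am ^ (i : ℕ)) * B.map Complex.ofReal := by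
    rw [hmapmul, hmapsum]
    congr 1
    refine Finset.sum_congr rfl fun i _ => ?_
    rw [hmapsmul', hpow]
  rw [hCc, hBc]
  rw [Matrix.sum_mul, Matrix.sum_mul, Matrix.sum_mul, Matrix.mul_sum]
  refine Finset.sum_congr rfl fun i _ => ?_
  simp only [Matrix.smul_mul, Matrix.mul_smul]
  congr 1
  rw [Matrix.mul_assoc (C₀.map Complex.ofReal) (Am ^ (i : ℕ)) M⁻¹, hcomm,
    ← Matrix.mul_assoc (C₀.map Complex.ofReal) M⁻¹ (Am ^ (i : ℕ)),
    Matrix.mul_assoc (C₀.map Complex.ofReal * M⁻¹) (Am ^ (i : ℕ))]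

/-- **frequency-domain fixed-`C` optimality, MISO case, infimum form.**
If none of the frequency points `z_k` is an eigenvalue of `A` and `(A, C₀)` is
observable, then the infimum of the frequency-domain cost over `(B, D)` with `C₀`
fixed equals the infimum over all `(B, C, D)`. -/
theorem freq_domain_fixed_C_optimality_inf {K n m : ℕ}
    (A : Matrix (Fin n) (Fin n) ℝ)
    (z : Fin K → ℂ)
    (hz : ∀ k : Fin K, (z k • (1 : Matrix (Fin n) (Fin n) ℂ) - A.map Complex.ofReal).det ≠ 0)
    (G : Fin K → Matrix (Fin 1) (Fin m) ℂ)
    (C₀ : Matrix (Fin 1) (Fin n) ℝ)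
    (hobs : LinearIndependent ℝ (fun i : Fin n => C₀ * A ^ (i : ℕ))) :
    sInf {v : ℝ | ∃ (B : Matrix (Fin n) (Fin m) ℝ) (D : Matrix (Fin 1) (Fin m) ℝ),
        v = freqDomainCost z G A B C₀ D} =
      sInf {v : ℝ | ∃ (B : Matrix (Fin n) (Fin m) ℝ) (C : Matrix (Fin 1) (Fin n) ℝ)
        (D : Matrix (Fin 1) (Fin m) ℝ), v = freqDomainCost z G A B C D} := by
  congr 1
  ext v
  constructor
  · rintro ⟨B, D, rfl⟩
    exact ⟨B, C₀, D, rfl⟩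
  · rintro ⟨B, C, D, rfl⟩
    obtain ⟨B', hB'⟩ := freq_key A z hz G C₀ hobs B C D
    exact ⟨B', D, hB'⟩
end
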